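/- Let E be a Banach space, let ({x_j'}, {x_j}) be an atomic decomposition of E, and let (y_j')_j be a sequence in E' such that there is a constant C < 1 with ∑_{j=1}^∞ |(x_j' − y_j')(x)| · ‖x_j‖ ≤ C·‖x‖ for every x ∈ E. Then there exists a sequence (y_j)_j in E such that ({y_j'}, {y_j}) is an atomic decomposition of E. -/

import Mathlib

open Filter Topology

/-- Perturbation of an atomic decomposition: if `(y_j')` is close to `(x_j')` in the sense
that `∑_j |(x_j' - y_j')(x)| ‖x_j‖ ≤ C ‖x‖` with `C < 1`, then `(y_j')` is the sequence of
coefficient functionals of an atomic decomposition with suitable vectors `(y_j)`. -/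
theorem stmt4 {E : Type*} [NormedAddCommGroup E] [NormedSpace ℝ E] [CompleteSpace E]
    (x' y' : ℕ → E →L[ℝ] ℝ) (x : ℕ → E)
    (had : ∀ v : E, Tendsto (fun n => ∑ j ∈ Finset.range n, x' j v • x j) atTop (𝓝 v))
    (C : ℝ) (hC : C < 1)
    (hsumm : ∀ v : E, Summable fun j => |(x' j - y' j) v| * ‖x j‖)
    (hbound : ∀ v : E, ∑' j, |(x' j - y' j) v| * ‖x j‖ ≤ C * ‖v‖) :
    ∃ y : ℕ → E, ∀ v : E,
      Tendsto (fun n => ∑ j ∈ Finset.range n, y' j v • y j) atTop (𝓝 v) := by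
  set d : ℕ → E →L[ℝ] ℝ := fun j => x' j - y' j with hd
  have hsumv : ∀ v : E, Summable fun j => (d j v) • x j := by
    intro v
    apply Summable.of_norm
    simpa [norm_smul, hd] using hsumm v
  let Slin : E →ₗ[ℝ] E :=
    { toFun := fun v => ∑' j, (d j v) • x j
      map_add' := by
        intro v w
        simp only [map_add, add_smul]
        exact Summable.tsum_add (hsumv v) (hsumv w)
      map_smul' := by
        intro c v
        simp only [map_smul, smul_eq_mul, mul_smul, RingHom.id_apply]
        exact Summable.tsum_const_smul c (hsumv v) }
  have hCnn : 0 ≤ max C 0 := le_max_right _ _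
  have hbnd : ∀ v, ‖Slin v‖ ≤ max C 0 * ‖v‖ := by
    intro v
    calc ‖Slin v‖ ≤ ∑' j, ‖(d j v) • x j‖ :=
          norm_tsum_le_tsum_norm (by simpa [norm_smul, hd] using hsumm v)
      _ = ∑' j, |d j v| * ‖x j‖ := by simp [norm_smul]
      _ ≤ C * ‖v‖ := hbound v
      _ ≤ max C 0 * ‖v‖ := mul_le_mul_of_nonneg_right (le_max_left _ _) (norm_nonneg v)
  let S : E →L[ℝ] E := Slin.mkContinuous (max C 0) hbnd
  have hSnorm : ‖S‖ < 1 :=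
    lt_of_le_of_lt (Slin.mkContinuous_norm_le hCnn hbnd) (max_lt hC zero_lt_one)
  let u : (E →L[ℝ] E)ˣ := Units.oneSub S hSnorm
  refine ⟨fun j => (↑u⁻¹ : E →L[ℝ] E) (x j), fun v => ?_⟩
  have h1 : Tendsto (fun n => ∑ j ∈ Finset.range n, y' j v • x j) atTop
      (𝓝 ((u : E →L[ℝ] E) v)) := by
    have hS : Tendsto (fun n => ∑ j ∈ Finset.range n, (d j v) • x j) atTop (𝓝 (Slin v)) :=
      (hsumv v).hasSum.tendsto_sum_nat
    have h := (had v).sub hS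
    have heq : ∀ n, ∑ j ∈ Finset.range n, y' j v • x j =
        (∑ j ∈ Finset.range n, x' j v • x j) - ∑ j ∈ Finset.range n, (d j v) • x j := by
      intro n
      rw [← Finset.sum_sub_distrib]
      refine Finset.sum_congr rfl fun j _ => ?_
      simp [hd, sub_smul]
    have huval : (u : E →L[ℝ] E) v = v - Slin v := by
      simp [u, Units.val_oneSub, S, ContinuousLinearMap.sub_apply]
    rw [huval]
    simpa [heq] using h
  have h2 := (((↑u⁻¹ : E →L[ℝ] E)).continuous.tendsto _).comp h1
  have hinv : (↑u⁻¹ : E →L[ℝ] E) ((u : E →L[ℝ] E) v) = v := by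
    have := u.inv_mul
    calc (↑u⁻¹ : E →L[ℝ] E) ((u : E →L[ℝ] E) v)
        = ((↑u⁻¹ * ↑u : E →L[ℝ] E)) v := rfl
      _ = v := by rw [u.inv_mul]; rfl
  rw [hinv] at h2
  convert h2 using 2 with n
  simp [Function.comp, map_sum]
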